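/- Linear identifiability: let (f, g) and (f', g') be two pairs of maps X → ℝ^M, Y → ℝ^M defining softmax conditional distributions p_{f,g} and p_{f',g'}, and suppose there exist y₀, y₁, …, y_M ∈ Y such that the vectors g(y_i) - g(y₀), i = 1..M, are linearly independent, and x₀, x₁, …, x_M ∈ X such that the vectors f(x_i) - f(x₀) are linearly independent. If p_{f,g}(y|x) = p_{f',g'}(y|x) for all x ∈ X and y ∈ Y, then with L (resp. L') the matrix with columns g(y_i) - g(y₀) (resp. g'(y_i) - g'(y₀)) and A := L^{-T} L'^{T}, A is invertible, f(x) = A f'(x) for all x, and g(y) - g(y₀) = A^{-T}(g'(y) - g'(y₀)) for all y. -/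

import Mathlib

open Matrix

/-- The softmax conditional model `p_{f,g}(y|x)`. -/
noncomputable def softmax {X Y : Type*} [Fintype Y] {M : ℕ}
    (f : X → Fin M → ℝ) (g : Y → Fin M → ℝ) (x : X) (y : Y) : ℝ :=
  Real.exp (∑ i, f x i * g y i) / ∑ y' : Y, Real.exp (∑ i, f x i * g y' i)

/-- Linear identifiability of softmax models under the diversity condition. -/
theorem linear_identifiability {X Y : Type*} [Fintype Y] {M : ℕ}
    (f f' : X → Fin M → ℝ) (g g' : Y → Fin M → ℝ)
    (y₀ : Y) (ys : Fin M → Y) (x₀ : X) (xs : Fin M → X)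
    (hdivg : LinearIndependent ℝ (fun i => g (ys i) - g y₀))
    (hdivf : LinearIndependent ℝ (fun i => f (xs i) - f x₀))
    (heq : ∀ x y, softmax f g x y = softmax f' g' x y)
    (L L' A : Matrix (Fin M) (Fin M) ℝ)
    (hL : ∀ i j, L i j = g (ys j) i - g y₀ i)
    (hL' : ∀ i j, L' i j = g' (ys j) i - g' y₀ i)
    (hA : A = (Lᵀ)⁻¹ * L'ᵀ) :
    IsUnit A.det ∧
    (∀ x, f x = A.mulVec (f' x)) ∧
    (∀ y, (fun i => g y i - g y₀ i) = (Aᵀ)⁻¹.mulVec (fun i => g' y i - g' y₀ i)) := by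
  have hne : Nonempty Y := ⟨y₀⟩
  -- Key identity from equality of softmax distributions
  have key : ∀ x y, ∑ i, f x i * (g y i - g y₀ i) = ∑ i, f' x i * (g' y i - g' y₀ i) := by
    intro x y
    have hS : (0:ℝ) < ∑ y' : Y, Real.exp (∑ i, f x i * g y' i) :=
      Finset.sum_pos (fun _ _ => Real.exp_pos _) Finset.univ_nonempty
    have hS' : (0:ℝ) < ∑ y' : Y, Real.exp (∑ i, f' x i * g' y' i) :=
      Finset.sum_pos (fun _ _ => Real.exp_pos _) Finset.univ_nonempty
    have e1 := heq x y
    have e2 := heq x y₀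
    unfold softmax at e1 e2
    rw [div_eq_div_iff hS.ne' hS'.ne'] at e1 e2
    have hcross : Real.exp (∑ i, f x i * g y i) * Real.exp (∑ i, f' x i * g' y₀ i)
        = Real.exp (∑ i, f' x i * g' y i) * Real.exp (∑ i, f x i * g y₀ i) :=
      mul_right_cancel₀ (mul_pos hS hS').ne'
        (by linear_combination (Real.exp (∑ i, f' x i * g' y₀ i) * ∑ y' : Y, Real.exp (∑ i, f x i * g y' i)) * e1
              - (Real.exp (∑ i, f' x i * g' y i) * ∑ y' : Y, Real.exp (∑ i, f x i * g y' i)) * e2)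
    rw [← Real.exp_add, ← Real.exp_add] at hcross
    have hsum := Real.exp_injective hcross
    simp only [mul_sub, Finset.sum_sub_distrib]
    linarith
  -- L is invertible
  have hLu : IsUnit L := by
    rw [← linearIndependent_cols_iff_isUnit]
    have : (fun i => Lᵀ i) = fun i => g (ys i) - g y₀ := by
      funext i; funext j
      simp [transpose_apply, hL, Pi.sub_apply]
    change LinearIndependent ℝ (fun i => Lᵀ i); rw [this]; exact hdivg
  have hLdet : IsUnit Lᵀ.det := by rw [det_transpose]; exact (isUnit_iff_isUnit_det L).mp hLu
  -- f x = A f' x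
  have hstep : ∀ x, Lᵀ.mulVec (f x) = L'ᵀ.mulVec (f' x) := by
    intro x
    funext j
    show ∑ i, Lᵀ j i * f x i = ∑ i, L'ᵀ j i * f' x i
    calc ∑ i, Lᵀ j i * f x i = ∑ i, f x i * (g (ys j) i - g y₀ i) := by
          refine Finset.sum_congr rfl fun i _ => ?_
          rw [transpose_apply, hL, mul_comm]
      _ = ∑ i, f' x i * (g' (ys j) i - g' y₀ i) := key x (ys j)
      _ = ∑ i, L'ᵀ j i * f' x i := by
          refine Finset.sum_congr rfl fun i _ => ?_
          rw [transpose_apply, hL', mul_comm]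
  have hf : ∀ x, f x = A.mulVec (f' x) := by
    intro x
    rw [hA, ← mulVec_mulVec, ← hstep x, mulVec_mulVec, nonsing_inv_mul _ hLdet, one_mulVec]
  -- the matrices of f-differences
  set F : Matrix (Fin M) (Fin M) ℝ := fun i j => f (xs j) i - f x₀ i with hF
  set F' : Matrix (Fin M) (Fin M) ℝ := fun i j => f' (xs j) i - f' x₀ i with hF'
  have hFu : IsUnit F := by
    rw [← linearIndependent_cols_iff_isUnit]
    have : (fun i => Fᵀ i) = fun i => f (xs i) - f x₀ := by
      funext i; funext j
      simp [hF, transpose_apply, Pi.sub_apply]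
      rfl
    change LinearIndependent ℝ (fun i => Fᵀ i); rw [this]; exact hdivf
  have hFA : F = A * F' := by
    ext i j
    have h1 := congrFun (hf (xs j)) i
    have h2 := congrFun (hf x₀) i
    simp only [mulVec, dotProduct] at h1 h2
    show f (xs j) i - f x₀ i = ∑ k, A i k * (f' (xs j) k - f' x₀ k)
    simp only [mul_sub, Finset.sum_sub_distrib]
    rw [← h1, ← h2]
  have hFdet : IsUnit F.det := (isUnit_iff_isUnit_det F).mp hFu
  have hAdet : IsUnit A.det := by
    have : F.det = A.det * F'.det := by rw [hFA, det_mul]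
    exact isUnit_of_mul_isUnit_left (this ▸ hFdet)
  have hF'det : IsUnit F'.det := by
    have : F.det = A.det * F'.det := by rw [hFA, det_mul]
    exact isUnit_of_mul_isUnit_right (this ▸ hFdet)
  -- the g part
  have hgstep : ∀ y, Fᵀ.mulVec (fun i => g y i - g y₀ i)
      = F'ᵀ.mulVec (fun i => g' y i - g' y₀ i) := by
    intro y
    funext j
    show ∑ i, Fᵀ j i * (g y i - g y₀ i) = ∑ i, F'ᵀ j i * (g' y i - g' y₀ i)
    have expand : ∀ i, Fᵀ j i * (g y i - g y₀ i)
        = f (xs j) i * (g y i - g y₀ i) - f x₀ i * (g y i - g y₀ i) := by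
      intro i; rw [transpose_apply]; show (f (xs j) i - f x₀ i) * _ = _; ring
    have expand' : ∀ i, F'ᵀ j i * (g' y i - g' y₀ i)
        = f' (xs j) i * (g' y i - g' y₀ i) - f' x₀ i * (g' y i - g' y₀ i) := by
      intro i; rw [transpose_apply]; show (f' (xs j) i - f' x₀ i) * _ = _; ring
    simp only [expand, expand', Finset.sum_sub_distrib]
    rw [key (xs j) y, key x₀ y]
  have hg : ∀ y, (fun i => g y i - g y₀ i) = (Aᵀ)⁻¹.mulVec (fun i => g' y i - g' y₀ i) := by
    intro y
    have hF'Tu : IsUnit F'ᵀ := (isUnit_iff_isUnit_det F'ᵀ).mpr (by rwa [det_transpose])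
    have hATdet : IsUnit Aᵀ.det := by rwa [det_transpose]
    have hFT : Fᵀ = F'ᵀ * Aᵀ := by rw [hFA, transpose_mul]
    have hmul : F'ᵀ.mulVec (Aᵀ.mulVec (fun i => g y i - g y₀ i))
        = F'ᵀ.mulVec (fun i => g' y i - g' y₀ i) := by
      rw [mulVec_mulVec, ← hFT]; exact hgstep y
    have hAv : Aᵀ.mulVec (fun i => g y i - g y₀ i) = fun i => g' y i - g' y₀ i :=
      mulVec_injective_iff_isUnit.mpr hF'Tu hmul
    rw [← hAv, mulVec_mulVec, nonsing_inv_mul _ hATdet, one_mulVec]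
  exact ⟨hAdet, hf, hg⟩
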